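/- arXiv:2002.00425 — 5 statements merged into one kernel-verified Lean document; each statement's English description precedes it below -/
import Mathlib

section
/- Assume the Gram matrix G is invertible, all functions ξ¹, …, ξⁿ are measurable, and let η := Σ_{j=1}^n a_j ξ^j for some a ∈ ℝⁿ. Let ω ⊆ ℝ^d be a Lebesgue-measurable set, and let u : ℝ^d → ℝ be measurable such that u − η and each least-squares basis function ξ̃ˡ are square-integrable on ω. Then the local least-squares error function u − Σ_{l=1}^m u(x_l) ξ̃ˡ is square-integrable on ω and satisfies the bound ‖u − Σ_{l=1}^m u(x_l) ξ̃ˡ‖_{L²(ω)} ≤ ‖u − η‖_{L²(ω)} + Σ_{l=1}^m |u(x_l) − η(x_l)| · ‖ξ̃ˡ‖_{L²(ω)}. -/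
open Matrix MeasureTheory

set_option maxHeartbeats 1000000 in
/-- L² bound for the local least-squares approximation error.
With `G` invertible, `η = Σ_j a_j ξ^j`, `ω` measurable, `u` measurable, and
`u − η` and the least-squares basis functions `ξ̃ˡ` square-integrable on `ω`,
the function `u − Σ_l u(x_l) ξ̃ˡ` is square-integrable on `ω` and
`‖u − Σ_l u(x_l) ξ̃ˡ‖_{L²(ω)} ≤ ‖u − η‖_{L²(ω)} + Σ_l |u(x_l) − η(x_l)| ‖ξ̃ˡ‖_{L²(ω)}`. -/
theorem cgfem_local_L2_bound {d n m : ℕ}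
    (ξ : Fin n → EuclideanSpace ℝ (Fin d) → ℝ)
    (hmeas : ∀ j, Measurable (ξ j))
    (x : Fin m → EuclideanSpace ℝ (Fin d))
    (Q : EuclideanSpace ℝ (Fin d) → Fin n → ℝ)
    (hQ : ∀ y j, Q y j = ξ j y)
    (G : Matrix (Fin n) (Fin n) ℝ)
    (hG : G = ∑ l, vecMulVec (Q (x l)) (Q (x l)))
    (hinv : IsUnit G)
    (ξt : Fin m → EuclideanSpace ℝ (Fin d) → ℝ)
    (hξt : ∀ l y, ξt l y = Q y ⬝ᵥ (G⁻¹ *ᵥ Q (x l)))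
    (a : Fin n → ℝ)
    (η : EuclideanSpace ℝ (Fin d) → ℝ)
    (hη : ∀ y, η y = ∑ j, a j * ξ j y)
    (ω : Set (EuclideanSpace ℝ (Fin d)))
    (hω : MeasurableSet ω)
    (u : EuclideanSpace ℝ (Fin d) → ℝ)
    (hu : Measurable u)
    (hL2 : MemLp (fun y => u y - η y) 2 (volume.restrict ω))
    (hL2' : ∀ l, MemLp (ξt l) 2 (volume.restrict ω)) :
    MemLp (fun y => u y - ∑ l, u (x l) * ξt l y) 2 (volume.restrict ω) ∧
    eLpNorm (fun y => u y - ∑ l, u (x l) * ξt l y) 2 (volume.restrict ω) ≤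
      eLpNorm (fun y => u y - η y) 2 (volume.restrict ω) +
      ∑ l, ENNReal.ofReal |u (x l) - η (x l)| * eLpNorm (ξt l) 2 (volume.restrict ω) := by
  -- reproduction: the least-squares basis reproduces η
  have key : ∀ y, ∑ l, η (x l) * ξt l y = η y := by
    intro y
    have hGa : G *ᵥ a = ∑ l, η (x l) • Q (x l) := by
      funext i
      simp only [hG, Matrix.mulVec, dotProduct, Matrix.sum_apply,
        Matrix.vecMulVec_apply, Finset.sum_mul, Finset.sum_apply, Pi.smul_apply,
        smul_eq_mul, hη, hQ]
      rw [Finset.sum_comm]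
      refine Finset.sum_congr rfl fun l _ => ?_
      exact Finset.sum_congr rfl fun j _ => by ring
    have hdet : IsUnit G.det := (Matrix.isUnit_iff_isUnit_det G).mp hinv
    have hinvG : G⁻¹ *ᵥ (G *ᵥ a) = a := by
      rw [Matrix.mulVec_mulVec, Matrix.nonsing_inv_mul G hdet, Matrix.one_mulVec]
    calc ∑ l, η (x l) * ξt l y
        = Q y ⬝ᵥ (G⁻¹ *ᵥ ∑ l, η (x l) • Q (x l)) := by
          simp only [hξt, dotProduct, Matrix.mulVec, Finset.sum_apply,
            Pi.smul_apply, smul_eq_mul, Finset.mul_sum]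
          rw [Finset.sum_comm]
          refine Finset.sum_congr rfl fun i _ => ?_
          rw [Finset.sum_comm]
          refine Finset.sum_congr rfl fun k _ => ?_
          refine Finset.sum_congr rfl fun l _ => ?_
          ring
      _ = Q y ⬝ᵥ a := by rw [← hGa, hinvG]
      _ = η y := by
          rw [hη]
          exact Finset.sum_congr rfl fun j _ => by rw [hQ]; ring
  -- pointwise identity
  have hfun : (fun y => u y - ∑ l, u (x l) * ξt l y)
      = fun y => (u y - η y) - ∑ l, (u (x l) - η (x l)) * ξt l y := by
    funext y
    have h1 : ∑ l, u (x l) * ξt l y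
        = (∑ l, (u (x l) - η (x l)) * ξt l y) + η y := by
      rw [← key y, ← Finset.sum_add_distrib]
      exact Finset.sum_congr rfl fun l _ => by ring
    rw [h1]; ring
  have hterm : ∀ l, MemLp (fun y => (u (x l) - η (x l)) * ξt l y) 2 (volume.restrict ω) :=
    fun l => (hL2' l).const_mul _
  have hsum : MemLp (fun y => ∑ l, (u (x l) - η (x l)) * ξt l y) 2 (volume.restrict ω) :=
    memLp_finset_sum Finset.univ (fun l _ => hterm l)
  have hmem : MemLp (fun y => u y - ∑ l, u (x l) * ξt l y) 2 (volume.restrict ω) := by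
    rw [hfun]; exact hL2.sub hsum
  refine ⟨hmem, ?_⟩
  rw [hfun]
  have h1 : eLpNorm (fun y => (u y - η y) - ∑ l, (u (x l) - η (x l)) * ξt l y) 2
      (volume.restrict ω) ≤ eLpNorm (fun y => u y - η y) 2 (volume.restrict ω) +
      eLpNorm (fun y => ∑ l, (u (x l) - η (x l)) * ξt l y) 2 (volume.restrict ω) :=
    eLpNorm_sub_le hL2.aestronglyMeasurable hsum.aestronglyMeasurable (by norm_num)
  refine h1.trans (add_le_add_right ?_ _)
  have hEq : (fun y => ∑ l, (u (x l) - η (x l)) * ξt l y)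
      = ∑ l, (fun y => (u (x l) - η (x l)) * ξt l y) := by
    funext y; simp
  have h2 := eLpNorm_sum_le (μ := volume.restrict ω) (p := 2)
    (f := fun l y => (u (x l) - η (x l)) * ξt l y) (s := Finset.univ)
    (fun l _ => (hterm l).aestronglyMeasurable) (by norm_num)
  rw [← hEq] at h2
  refine h2.trans (le_of_eq (Finset.sum_congr rfl fun l _ => ?_))
  have h3 : (fun y => (u (x l) - η (x l)) * ξt l y) = (u (x l) - η (x l)) • ξt l := by
    funext y; simp [smul_eq_mul]
  beta_reduce
  rw [h3, eLpNorm_const_smul, Real.enorm_eq_ofReal_abs]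
end

section
/- Assume the Gram matrix G is invertible and each ξ^j is differentiable on ℝ^d (so each least-squares basis function ξ̃ˡ is differentiable), and let η := Σ_{j=1}^n a_j ξ^j for some a ∈ ℝⁿ. Let ω ⊆ ℝ^d be a Lebesgue-measurable set and let u : ℝ^d → ℝ be differentiable, with ‖D(u−η)‖ and each ‖Dξ̃ˡ‖ square-integrable on ω (D denoting the Fréchet derivative). Then (∫_ω ‖D(u − Σ_{l=1}^m u(x_l) ξ̃ˡ)(x)‖² dx)^{1/2} ≤ (∫_ω ‖D(u − η)(x)‖² dx)^{1/2} + Σ_{l=1}^m |u(x_l) − η(x_l)| · (∫_ω ‖Dξ̃ˡ(x)‖² dx)^{1/2}. -/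
open Matrix MeasureTheory

section helpers

variable {α E : Type*} [MeasurableSpace α] {μ : Measure α} [NormedAddCommGroup E]

lemma sqrt_integral_eq_toReal_eLpNorm {f : α → E} (hf : MemLp f 2 μ) :
    Real.sqrt (∫ y, ‖f y‖ ^ 2 ∂μ) = (eLpNorm f 2 μ).toReal := by
  rw [hf.eLpNorm_eq_integral_rpow_norm two_ne_zero ENNReal.ofNat_ne_top,
    ENNReal.toReal_ofReal (by positivity)]
  have h2 : (2 : ENNReal).toReal = 2 := by norm_num
  rw [h2]
  have : (∫ a, ‖f a‖ ^ (2:ℝ) ∂μ) = ∫ a, ‖f a‖ ^ (2:ℕ) ∂μ := by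
    congr 1; funext a; rw [← Real.rpow_natCast]; norm_num
  rw [this, Real.sqrt_eq_rpow, one_div]

lemma L2_tri {f g : α → E} (hf : MemLp f 2 μ) (hg : MemLp g 2 μ) :
    Real.sqrt (∫ y, ‖f y + g y‖ ^ 2 ∂μ) ≤
      Real.sqrt (∫ y, ‖f y‖ ^ 2 ∂μ) + Real.sqrt (∫ y, ‖g y‖ ^ 2 ∂μ) := by
  have hfg : MemLp (fun y => f y + g y) 2 μ := hf.add hg
  rw [sqrt_integral_eq_toReal_eLpNorm hf, sqrt_integral_eq_toReal_eLpNorm hg,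
    sqrt_integral_eq_toReal_eLpNorm hfg]
  have h := eLpNorm_add_le hf.aestronglyMeasurable hg.aestronglyMeasurable one_le_two
  calc (eLpNorm (fun y => f y + g y) 2 μ).toReal
      ≤ (eLpNorm f 2 μ + eLpNorm g 2 μ).toReal := by
        apply ENNReal.toReal_mono (by simp [hf.2.ne, hg.2.ne, ENNReal.add_ne_top]) h
    _ = (eLpNorm f 2 μ).toReal + (eLpNorm g 2 μ).toReal :=
        ENNReal.toReal_add hf.2.ne hg.2.ne

lemma memℒp_fun_sum {ι : Type*} (t : Finset ι) (F : ι → α → E)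
    (ht : ∀ i ∈ t, MemLp (F i) 2 μ) : MemLp (fun y => ∑ i ∈ t, F i y) 2 μ := by
  have h := memLp_finset_sum' t ht
  have he : (∑ i ∈ t, F i) = fun y => ∑ i ∈ t, F i y := by funext y; simp
  rwa [he] at h

lemma L2_tri_sum {ι : Type*} [DecidableEq ι] (s : Finset ι) (F : ι → α → E)
    (hF : ∀ i ∈ s, MemLp (F i) 2 μ) :
    Real.sqrt (∫ y, ‖∑ i ∈ s, F i y‖ ^ 2 ∂μ) ≤
      ∑ i ∈ s, Real.sqrt (∫ y, ‖F i y‖ ^ 2 ∂μ) := by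
  induction s using Finset.induction with
  | empty => simp
  | insert j t hnot ih =>
    have hj := hF j (Finset.mem_insert_self j t)
    have ht : ∀ i ∈ t, MemLp (F i) 2 μ := fun i hi => hF i (Finset.mem_insert_of_mem hi)
    simp only [Finset.sum_insert hnot]
    exact le_trans (L2_tri hj (memℒp_fun_sum t F ht)) (by gcongr; exact ih ht)

lemma L2_smul (c : ℝ) {E : Type*} [NormedAddCommGroup E] [NormedSpace ℝ E] (f : α → E) :
    Real.sqrt (∫ y, ‖c • f y‖ ^ 2 ∂μ) = |c| * Real.sqrt (∫ y, ‖f y‖ ^ 2 ∂μ) := by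
  have : ∀ y, ‖c • f y‖ ^ 2 = c ^ 2 * ‖f y‖ ^ 2 := by
    intro y; rw [norm_smul, mul_pow]; simp [Real.norm_eq_abs, sq_abs]
  simp_rw [this]
  rw [integral_const_mul, Real.sqrt_mul (sq_nonneg c), Real.sqrt_sq_eq_abs]

end helpers

set_option maxHeartbeats 1000000 in
/-- H¹-seminorm bound for the local least-squares approximation error.
With `G` invertible, the `ξ^j` differentiable, `η = Σ_j a_j ξ^j`, `u` differentiable,
and the squared norms of `D(u−η)` and of each `Dξ̃ˡ` integrable on `ω`:
`(∫_ω ‖D(u − Σ_l u(x_l) ξ̃ˡ)‖²)^{1/2} ≤ (∫_ω ‖D(u−η)‖²)^{1/2}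
  + Σ_l |u(x_l) − η(x_l)| (∫_ω ‖Dξ̃ˡ‖²)^{1/2}`. -/
theorem cgfem_local_H1_bound {d n m : ℕ}
    (ξ : Fin n → EuclideanSpace ℝ (Fin d) → ℝ)
    (hdiff : ∀ j, Differentiable ℝ (ξ j))
    (x : Fin m → EuclideanSpace ℝ (Fin d))
    (Q : EuclideanSpace ℝ (Fin d) → Fin n → ℝ)
    (hQ : ∀ y j, Q y j = ξ j y)
    (G : Matrix (Fin n) (Fin n) ℝ)
    (hG : G = ∑ l, vecMulVec (Q (x l)) (Q (x l)))
    (hinv : IsUnit G)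
    (ξt : Fin m → EuclideanSpace ℝ (Fin d) → ℝ)
    (hξt : ∀ l y, ξt l y = Q y ⬝ᵥ (G⁻¹ *ᵥ Q (x l)))
    (a : Fin n → ℝ)
    (η : EuclideanSpace ℝ (Fin d) → ℝ)
    (hη : ∀ y, η y = ∑ j, a j * ξ j y)
    (ω : Set (EuclideanSpace ℝ (Fin d)))
    (hω : MeasurableSet ω)
    (u : EuclideanSpace ℝ (Fin d) → ℝ)
    (hu : Differentiable ℝ u)
    (hint : IntegrableOn (fun y => ‖fderiv ℝ (fun z => u z - η z) y‖ ^ 2) ω)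
    (hint' : ∀ l, IntegrableOn (fun y => ‖fderiv ℝ (ξt l) y‖ ^ 2) ω) :
    Real.sqrt (∫ y in ω, ‖fderiv ℝ (fun z => u z - ∑ l, u (x l) * ξt l z) y‖ ^ 2) ≤
      Real.sqrt (∫ y in ω, ‖fderiv ℝ (fun z => u z - η z) y‖ ^ 2) +
      ∑ l, |u (x l) - η (x l)| * Real.sqrt (∫ y in ω, ‖fderiv ℝ (ξt l) y‖ ^ 2) := by
  classical
  set μ := volume.restrict ω with hμ
  -- differentiability facts
  have hηd : Differentiable ℝ η := by
    have : η = fun y => ∑ j, a j * ξ j y := funext hη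
    rw [this]
    exact Differentiable.fun_sum fun j _ => (hdiff j).const_mul _
  have hξtd : ∀ l, Differentiable ℝ (ξt l) := by
    intro l
    have : ξt l = fun y => ∑ j, ξ j y * (G⁻¹ *ᵥ Q (x l)) j := by
      funext y; rw [hξt]; simp [dotProduct, hQ]
    rw [this]
    exact Differentiable.fun_sum fun j _ => (hdiff j).mul_const _
  -- reproduction property
  have hdet : IsUnit G.det := (Matrix.isUnit_iff_isUnit_det G).mp hinv
  have hGa : (∑ l, η (x l) • Q (x l)) = G *ᵥ a := by
    funext i
    simp only [hG, Finset.sum_apply, Pi.smul_apply, smul_eq_mul, Matrix.mulVec,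
      dotProduct, Matrix.sum_apply, Matrix.vecMulVec_apply, hη, hQ,
      Finset.sum_mul, Finset.mul_sum]
    rw [Finset.sum_comm]
    exact Finset.sum_congr rfl fun l _ => Finset.sum_congr rfl fun j _ => by ring
  have key : (∑ l, η (x l) • (G⁻¹ *ᵥ Q (x l))) = a := by
    have h1 : (∑ l, η (x l) • (G⁻¹ *ᵥ Q (x l))) = G⁻¹ *ᵥ (∑ l, η (x l) • Q (x l)) := by
      simp_rw [← Matrix.mulVecLin_apply, ← LinearMap.map_smul]
      rw [← map_sum]
    rw [h1, hGa, Matrix.mulVec_mulVec, Matrix.nonsing_inv_mul G hdet, Matrix.one_mulVec]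
  have repro : ∀ z, ∑ l, η (x l) * ξt l z = η z := by
    intro z
    have e1 : ∑ l, η (x l) * ξt l z = Q z ⬝ᵥ (∑ l, η (x l) • (G⁻¹ *ᵥ Q (x l))) := by
      simp only [hξt, dotProduct, Finset.sum_apply, Pi.smul_apply, smul_eq_mul,
        Finset.mul_sum]
      rw [Finset.sum_comm]
      exact Finset.sum_congr rfl fun i _ => Finset.sum_congr rfl fun l _ => by ring
    rw [e1, key, hη z]
    simp [dotProduct, hQ, mul_comm]
  -- pointwise identity
  obtain ⟨c, hc⟩ : ∃ c : Fin m → ℝ, ∀ l, c l = u (x l) - η (x l) :=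
    ⟨fun l => u (x l) - η (x l), fun _ => rfl⟩
  have hpt : (fun z => u z - ∑ l, u (x l) * ξt l z)
      = fun z => (u z - η z) - ∑ l, c l * ξt l z := by
    funext z
    have : ∑ l, c l * ξt l z = ∑ l, u (x l) * ξt l z - ∑ l, η (x l) * ξt l z := by
      rw [← Finset.sum_sub_distrib]
      congr 1; funext l; rw [hc]; ring
    rw [this, repro z]; ring
  -- derivative identity
  have hder : ∀ y, fderiv ℝ (fun z => u z - ∑ l, u (x l) * ξt l z) y
      = fderiv ℝ (fun z => u z - η z) y + ∑ l, (-(c l)) • fderiv ℝ (ξt l) y := by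
    intro y
    rw [hpt]
    have hsd : DifferentiableAt ℝ (fun z => ∑ l, c l * ξt l z) y :=
      (Differentiable.fun_sum fun l _ => ((hξtd l).const_mul _)).differentiableAt
    rw [fderiv_fun_sub (f := fun z => u z - η z) ((hu y).sub (hηd y)) hsd]
    have : fderiv ℝ (fun z => ∑ l, c l * ξt l z) y = ∑ l, c l • fderiv ℝ (ξt l) y := by
      rw [fderiv_fun_sum (fun l _ => ((hξtd l).const_mul (c l)).differentiableAt)]
      congr 1; funext l
      rw [fderiv_const_mul ((hξtd l).differentiableAt)]
    rw [this]
    have h2 : ∑ l, (-(c l)) • fderiv ℝ (ξt l) y = -(∑ l, c l • fderiv ℝ (ξt l) y) := by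
      simp [neg_smul, Finset.sum_neg_distrib]
    rw [h2, sub_eq_add_neg]
  -- measurability / Memℒp
  have hmf : MemLp (fun y => fderiv ℝ (fun z => u z - η z) y) 2 μ := by
    refine (memLp_two_iff_integrable_sq_norm ?_).mpr hint
    exact (measurable_fderiv ℝ _).aestronglyMeasurable
  have hmg : ∀ l, MemLp (fun y => fderiv ℝ (ξt l) y) 2 μ := by
    intro l
    refine (memLp_two_iff_integrable_sq_norm ?_).mpr (hint' l)
    exact (measurable_fderiv ℝ _).aestronglyMeasurable
  have hmg' : ∀ l, MemLp (fun y => (-(c l)) • fderiv ℝ (ξt l) y) 2 μ := by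
    intro l
    exact MemLp.const_smul (hmg l) (-(c l))
  -- put it together
  calc Real.sqrt (∫ y in ω, ‖fderiv ℝ (fun z => u z - ∑ l, u (x l) * ξt l z) y‖ ^ 2)
      = Real.sqrt (∫ y in ω, ‖fderiv ℝ (fun z => u z - η z) y
          + ∑ l, (-(c l)) • fderiv ℝ (ξt l) y‖ ^ 2) := by
        congr 1; apply integral_congr_ae; filter_upwards with y; rw [hder y]
    _ ≤ Real.sqrt (∫ y in ω, ‖fderiv ℝ (fun z => u z - η z) y‖ ^ 2)
          + ∑ l, Real.sqrt (∫ y in ω, ‖(-(c l)) • fderiv ℝ (ξt l) y‖ ^ 2) := by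
        refine le_trans (L2_tri hmf (memℒp_fun_sum Finset.univ
          (fun l y => (-(c l)) • fderiv ℝ (ξt l) y) fun l _ => hmg' l)) ?_
        exact add_le_add_right (L2_tri_sum Finset.univ
          (fun l y => (-(c l)) • fderiv ℝ (ξt l) y) fun l _ => hmg' l) _
    _ = Real.sqrt (∫ y in ω, ‖fderiv ℝ (fun z => u z - η z) y‖ ^ 2)
          + ∑ l, |u (x l) - η (x l)| * Real.sqrt (∫ y in ω, ‖fderiv ℝ (ξt l) y‖ ^ 2) := by
        have h3 : ∀ l : Fin m, Real.sqrt (∫ y in ω, ‖(-(c l)) • fderiv ℝ (ξt l) y‖ ^ 2)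
            = |u (x l) - η (x l)| * Real.sqrt (∫ y in ω, ‖fderiv ℝ (ξt l) y‖ ^ 2) := by
          intro l
          rw [L2_smul (-(c l)) (fun y => fderiv ℝ (ξt l) y), abs_neg, hc]
        simp only [h3]
end

section
/- Let the partition-of-unity setup hold, and let u : ℝ^d → ℝ and η_i : ℝ^d → ℝ (i ∈ I) be measurable functions with u − η_i square-integrable on Ω ∩ ω_i for each i. Then ∫_Ω (u − Σ_{i∈I} N_i η_i)² dx ≤ κ C₁² Σ_{i∈I} ∫_{Ω∩ω_i} (u − η_i)² dx. -/
open MeasureTheory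

/-- L² estimate for partition-of-unity pasting.
In the partition-of-unity setup, for measurable `u` and `η_i` with `u − η_i`
square-integrable on `Ω ∩ ω_i`,
`∫_Ω (u − Σ_i N_i η_i)² ≤ κ C₁² Σ_i ∫_{Ω∩ω_i} (u−η_i)²`. -/
theorem pu_L2_estimate {d : ℕ} {ι : Type*} [Fintype ι]
    (Ω : Set (EuclideanSpace ℝ (Fin d))) (hΩ : IsOpen Ω)
    (h C₁ C₂ : ℝ) (hh : 0 < h) (hC₁ : 0 < C₁) (hC₂ : 0 < C₂)
    (κ : ℕ) (hκ : 0 < κ)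
    (N : ι → EuclideanSpace ℝ (Fin d) → ℝ)
    (hNdiff : ∀ i, Differentiable ℝ (N i))
    (hPU : ∀ x ∈ Ω, ∑ i, N i x = 1)
    (ω : ι → Set (EuclideanSpace ℝ (Fin d)))
    (hωmeas : ∀ i, MeasurableSet (ω i))
    (hsupp : ∀ i, ∀ x ∉ ω i, N i x = 0 ∧ fderiv ℝ (N i) x = 0)
    (hNbd : ∀ i x, |N i x| ≤ C₁)
    (hDNbd : ∀ i x, ‖fderiv ℝ (N i) x‖ ≤ C₂ / h)
    (hoverlap : ∀ x ∈ Ω, ({i | x ∈ ω i} : Set ι).ncard ≤ κ)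
    (u : EuclideanSpace ℝ (Fin d) → ℝ) (hu : Measurable u)
    (η : ι → EuclideanSpace ℝ (Fin d) → ℝ) (hη : ∀ i, Measurable (η i))
    (hint : ∀ i, IntegrableOn (fun x => (u x - η i x) ^ 2) (Ω ∩ ω i)) :
    ∫ x in Ω, (u x - ∑ i, N i x * η i x) ^ 2 ≤
      (κ : ℝ) * C₁ ^ 2 * ∑ i, ∫ x in Ω ∩ ω i, (u x - η i x) ^ 2 := by
  classical
  set f : EuclideanSpace ℝ (Fin d) → ℝ := fun x => (u x - ∑ i, N i x * η i x) ^ 2 with hf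
  set g : EuclideanSpace ℝ (Fin d) → ℝ := fun x =>
    (κ : ℝ) * C₁ ^ 2 * ∑ i, (Ω ∩ ω i).indicator (fun y => (u y - η i y) ^ 2) x with hg
  have hΩmeas : MeasurableSet Ω := hΩ.measurableSet
  have hΩωmeas : ∀ i, MeasurableSet (Ω ∩ ω i) := fun i => hΩmeas.inter (hωmeas i)
  -- pointwise bound on Ω
  have hpt : ∀ x ∈ Ω, f x ≤ g x := by
    intro x hx
    have hrw : u x - ∑ i, N i x * η i x = ∑ i, N i x * (u x - η i x) := by
      have h1 : ∑ i, N i x * u x = u x := by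
        rw [← Finset.sum_mul, hPU x hx, one_mul]
      simp only [mul_sub, Finset.sum_sub_distrib, h1]
    set s : Finset ι := Finset.univ.filter (fun i => x ∈ ω i) with hs
    have hcard : (s.card : ℝ) ≤ (κ : ℝ) := by
      have := hoverlap x hx
      have hset : ({i | x ∈ ω i} : Set ι).ncard = s.card := by
        rw [Set.ncard_eq_toFinset_card']
        congr 1
        ext i; simp [hs]
      exact_mod_cast hset ▸ this
    have hsum : ∑ i, N i x * (u x - η i x) = ∑ i ∈ s, N i x * (u x - η i x) := by
      symm
      apply Finset.sum_subset (Finset.subset_univ _)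
      intro i _ hi
      have hxω : x ∉ ω i := by simpa [hs] using hi
      rw [(hsupp i x hxω).1, zero_mul]
    have hCS : (∑ i ∈ s, N i x * (u x - η i x)) ^ 2 ≤
        (s.card : ℝ) * ∑ i ∈ s, (N i x * (u x - η i x)) ^ 2 := by
      exact sq_sum_le_card_mul_sum_sq
    have hterm : ∀ i ∈ s, (N i x * (u x - η i x)) ^ 2 ≤
        C₁ ^ 2 * (Ω ∩ ω i).indicator (fun y => (u y - η i y) ^ 2) x := by
      intro i hi
      have hxω : x ∈ ω i := by simpa [hs] using hi
      rw [Set.indicator_of_mem (Set.mem_inter hx hxω)]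
      rw [mul_pow]
      apply mul_le_mul_of_nonneg_right _ (sq_nonneg _)
      rw [← sq_abs]
      exact pow_le_pow_left₀ (abs_nonneg _) (hNbd i x) 2
    have hsum2 : ∑ i ∈ s, (N i x * (u x - η i x)) ^ 2 ≤
        C₁ ^ 2 * ∑ i, (Ω ∩ ω i).indicator (fun y => (u y - η i y) ^ 2) x := by
      calc ∑ i ∈ s, (N i x * (u x - η i x)) ^ 2
          ≤ ∑ i ∈ s, C₁ ^ 2 * (Ω ∩ ω i).indicator (fun y => (u y - η i y) ^ 2) x :=
            Finset.sum_le_sum hterm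
        _ ≤ ∑ i, C₁ ^ 2 * (Ω ∩ ω i).indicator (fun y => (u y - η i y) ^ 2) x := by
            apply Finset.sum_le_sum_of_subset_of_nonneg (Finset.subset_univ _)
            intro i _ _
            exact mul_nonneg (sq_nonneg _) (Set.indicator_nonneg (fun y _ => sq_nonneg _) x)
        _ = C₁ ^ 2 * ∑ i, (Ω ∩ ω i).indicator (fun y => (u y - η i y) ^ 2) x :=
            (Finset.mul_sum _ _ _).symm
    have hind_nonneg : (0:ℝ) ≤ ∑ i, (Ω ∩ ω i).indicator (fun y => (u y - η i y) ^ 2) x :=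
      Finset.sum_nonneg fun i _ => Set.indicator_nonneg (fun y _ => sq_nonneg _) x
    calc f x = (∑ i ∈ s, N i x * (u x - η i x)) ^ 2 := by rw [hf]; simp only; rw [hrw, hsum]
      _ ≤ (s.card : ℝ) * ∑ i ∈ s, (N i x * (u x - η i x)) ^ 2 := hCS
      _ ≤ (s.card : ℝ) * (C₁ ^ 2 * ∑ i, (Ω ∩ ω i).indicator (fun y => (u y - η i y) ^ 2) x) :=
          mul_le_mul_of_nonneg_left hsum2 (by positivity)
      _ ≤ (κ : ℝ) * (C₁ ^ 2 * ∑ i, (Ω ∩ ω i).indicator (fun y => (u y - η i y) ^ 2) x) :=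
          mul_le_mul_of_nonneg_right hcard (by positivity)
      _ = g x := by rw [hg]; ring
  -- integrability
  have hind_int : ∀ i, Integrable ((Ω ∩ ω i).indicator (fun y => (u y - η i y) ^ 2)) := by
    intro i
    exact (hint i).integrable_indicator (hΩωmeas i)
  have hg_int : IntegrableOn g Ω := by
    apply Integrable.integrableOn
    apply Integrable.const_mul
    exact integrable_finset_sum _ (fun i _ => hind_int i)
  have hf_meas : Measurable f := by
    apply Measurable.pow_const
    apply hu.sub
    exact Finset.measurable_sum _ (fun i _ => ((hNdiff i).continuous.measurable).mul (hη i))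
  have hf_int : IntegrableOn f Ω := by
    apply Integrable.mono' hg_int (hf_meas.aestronglyMeasurable.restrict)
    filter_upwards [ae_restrict_mem hΩmeas] with x hx
    rw [Real.norm_eq_abs, abs_of_nonneg (sq_nonneg _)]
    exact hpt x hx
  have hmono := setIntegral_mono_on hf_int hg_int hΩmeas hpt
  refine hmono.trans_eq ?_
  rw [hg]
  simp only
  rw [integral_const_mul, integral_finset_sum _ (fun i _ => (hind_int i).integrableOn)]
  congr 1
  apply Finset.sum_congr rfl
  intro i _
  rw [setIntegral_indicator (hΩωmeas i), ← Set.inter_assoc, Set.inter_self]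
end

section
/- For every σ with 0 ≤ σ < 1/2 and every integer l ≥ 2, the extension Q̂ : ℝ → ℝ of the flat-top function, defined by Q̂(ξ) = 1 for ξ ≤ −1+2σ, Q̂(ξ) = (1 − t(ξ)^l)^l with t(ξ) = (ξ + 1 − 2σ)/(2(1 − 2σ)) for −1+2σ ≤ ξ ≤ 1−2σ, and Q̂(ξ) = 0 for ξ ≥ 1−2σ, is continuously differentiable on all of ℝ, and its derivative satisfies |Q̂′(ξ)| ≤ l² / (2(1 − 2σ)) for every ξ ∈ ℝ. -/
/-- For `0 ≤ σ < 1/2` and an integer `l ≥ 2`, the extension `Q̂` of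
the flat-top function to `ℝ` (by the constant `1` to the left and `0` to the right)
is continuously differentiable on `ℝ` and its derivative satisfies
`|Q̂′(ξ)| ≤ l² / (2(1 − 2σ))` for every `ξ`. -/
theorem flat_top_extension_C1 (σ : ℝ) (hσ0 : 0 ≤ σ) (hσ : σ < 1 / 2)
    (l : ℕ) (hl : 2 ≤ l)
    (t : ℝ → ℝ) (ht : ∀ ξ, t ξ = (ξ + 1 - 2 * σ) / (2 * (1 - 2 * σ)))
    (Qhat : ℝ → ℝ)
    (hQ : ∀ ξ, Qhat ξ =
      if ξ ≤ -1 + 2 * σ then 1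
      else if ξ ≤ 1 - 2 * σ then (1 - (t ξ) ^ l) ^ l
      else 0) :
    ContDiff ℝ 1 Qhat ∧
    ∀ ξ : ℝ, |deriv Qhat ξ| ≤ (l : ℝ) ^ 2 / (2 * (1 - 2 * σ)) := by
  set c : ℝ := 2 * (1 - 2 * σ) with hcdef
  have hc : (0:ℝ) < c := by rw [hcdef]; linarith
  set a : ℝ := -1 + 2 * σ with ha
  set b : ℝ := 1 - 2 * σ with hb
  have hab : a < b := by rw [ha, hb]; linarith
  have hl0 : l ≠ 0 := by omega
  have hl1 : l - 1 ≠ 0 := by omega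
  have ht' : t = fun ξ => (ξ + (1 - 2 * σ)) / c := by
    funext ξ; rw [ht]; ring_nf
  have htc : Continuous t := by rw [ht']; fun_prop
  have htderiv : ∀ ξ, HasDerivAt t (1 / c) ξ := by
    intro ξ
    rw [ht']
    simpa using ((hasDerivAt_id ξ).add_const (1 - 2 * σ)).div_const c
  -- values of t at endpoints
  have hta : t a = 0 := by
    rw [ht]; rw [show a + 1 - 2 * σ = 0 by rw [ha]; ring, zero_div]
  have htb : t b = 1 := by
    rw [ht]; rw [show b + 1 - 2 * σ = c by rw [hb, hcdef]; ring]
    exact div_self hc.ne'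
  -- the smooth middle piece and its derivative
  set g : ℝ → ℝ := fun ξ => (1 - t ξ ^ l) ^ l with hgdef
  set G : ℝ → ℝ := fun ξ =>
    (l : ℝ) * (1 - t ξ ^ l) ^ (l - 1) * (-((l : ℝ) * t ξ ^ (l - 1) * (1 / c))) with hGdef
  have hg : ∀ ξ, HasDerivAt g (G ξ) ξ := by
    intro ξ
    have h2 : HasDerivAt (fun ξ => t ξ ^ l) ((l : ℝ) * t ξ ^ (l - 1) * (1 / c)) ξ :=
      (htderiv ξ).pow l
    exact (h2.const_sub 1).pow l
  have hGa : G a = 0 := by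
    simp [hGdef, hta, zero_pow hl1]
  have hGb : G b = 0 := by
    simp [hGdef, htb, zero_pow hl1]
  have hGc : Continuous G := by
    rw [hGdef]; fun_prop
  -- values of Qhat
  have hleft : ∀ ξ, ξ ≤ a → Qhat ξ = 1 := by
    intro ξ h; rw [hQ]; simp [← ha, h]
  have hmid : ∀ ξ, ξ ∈ Set.Icc a b → Qhat ξ = g ξ := by
    intro ξ ⟨h1, h2⟩
    rw [hQ, hgdef]
    by_cases hxa : ξ ≤ a
    · have : ξ = a := le_antisymm hxa h1
      subst this
      simp [← ha, hta, zero_pow hl0]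
    · simp [← ha, ← hb, hxa, h2]
  have hright : ∀ ξ, b ≤ ξ → Qhat ξ = 0 := by
    intro ξ h
    rw [hQ]
    have hxa : ¬ ξ ≤ a := by push_neg; linarith
    by_cases hxb : ξ ≤ b
    · have : ξ = b := le_antisymm hxb h
      subst this
      simp [← ha, ← hb, hxa, htb, one_pow, sub_self, zero_pow hl0]
    · simp [← ha, ← hb, hxa, hxb]
  -- the global derivative
  have hQd : ∀ ξ, HasDerivAt Qhat (G (max a (min b ξ))) ξ := by
    intro ξ
    rcases lt_trichotomy ξ a with hxa | hxa | hxa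
    · have hclamp : max a (min b ξ) = a := by
        rw [min_eq_right (le_of_lt (hxa.trans hab)), max_eq_left hxa.le]
      rw [hclamp, hGa]
      have heq : Qhat =ᶠ[nhds ξ] fun _ => (1:ℝ) :=
        Filter.eventuallyEq_of_mem (Iio_mem_nhds hxa) (fun η hη => hleft η (le_of_lt hη))
      exact (hasDerivAt_const ξ (1:ℝ)).congr_of_eventuallyEq heq
    · rw [hxa]
      have hclamp : max a (min b a) = a := by
        rw [min_eq_right hab.le, max_self]
      rw [hclamp, hGa]
      have hL : HasDerivWithinAt Qhat 0 (Set.Iic a) a := by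
        have := (hasDerivWithinAt_const a (Set.Iic a) (1:ℝ))
        exact this.congr (fun η hη => hleft η hη) (hleft a le_rfl)
      have hR : HasDerivWithinAt Qhat 0 (Set.Ici a) a := by
        have h1 : HasDerivWithinAt g 0 (Set.Ici a) a := by
          have := (hg a).hasDerivWithinAt (s := Set.Ici a)
          rwa [hGa] at this
        apply h1.congr_of_eventuallyEq _ (hmid a ⟨le_rfl, hab.le⟩)
        have hmem : Set.Ici a ∩ Set.Iic b ∈ nhdsWithin a (Set.Ici a) :=
          Filter.inter_mem self_mem_nhdsWithin
            (mem_nhdsWithin_of_mem_nhds (Iic_mem_nhds hab))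
        exact Filter.eventually_of_mem hmem (fun η hη => hmid η ⟨hη.1, hη.2⟩)
      have := hL.union hR
      rw [Set.Iic_union_Ici] at this
      exact hasDerivWithinAt_univ.mp this
    · rcases lt_trichotomy ξ b with hxb | hxb | hxb
      · have hclamp : max a (min b ξ) = ξ := by
          rw [min_eq_right hxb.le, max_eq_right hxa.le]
        rw [hclamp]
        apply (hg ξ).congr_of_eventuallyEq
        have hmem : Set.Ioo a b ∈ nhds ξ := Ioo_mem_nhds hxa hxb
        exact Filter.eventually_of_mem hmem
          (fun η hη => hmid η ⟨hη.1.le, hη.2.le⟩)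
      · rw [hxb]
        have hclamp : max a (min b b) = b := by
          rw [min_self, max_eq_right hab.le]
        rw [hclamp, hGb]
        have hL : HasDerivWithinAt Qhat 0 (Set.Iic b) b := by
          have h1 : HasDerivWithinAt g 0 (Set.Iic b) b := by
            have := (hg b).hasDerivWithinAt (s := Set.Iic b)
            rwa [hGb] at this
          apply h1.congr_of_eventuallyEq _ (hmid b ⟨hab.le, le_rfl⟩)
          have hmem : Set.Iic b ∩ Set.Ici a ∈ nhdsWithin b (Set.Iic b) :=
            Filter.inter_mem self_mem_nhdsWithin
              (mem_nhdsWithin_of_mem_nhds (Ici_mem_nhds hab))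
          exact Filter.eventually_of_mem hmem (fun η hη => hmid η ⟨hη.2, hη.1⟩)
        have hR : HasDerivWithinAt Qhat 0 (Set.Ici b) b := by
          have := (hasDerivWithinAt_const b (Set.Ici b) (0:ℝ))
          exact this.congr (fun η hη => hright η hη) (hright b le_rfl)
        have := hL.union hR
        rw [Set.Iic_union_Ici] at this
        exact hasDerivWithinAt_univ.mp this
      · have hclamp : max a (min b ξ) = b := by
          rw [min_eq_left hxb.le, max_eq_right hab.le]
        rw [hclamp, hGb]
        have heq : Qhat =ᶠ[nhds ξ] fun _ => (0:ℝ) :=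
          Filter.eventuallyEq_of_mem (Ioi_mem_nhds hxb) (fun η hη => hright η (le_of_lt hη))
        exact (hasDerivAt_const ξ (0:ℝ)).congr_of_eventuallyEq heq
  have hderiv : deriv Qhat = fun ξ => G (max a (min b ξ)) :=
    funext fun ξ => (hQd ξ).deriv
  constructor
  · rw [contDiff_one_iff_deriv]
    refine ⟨fun ξ => (hQd ξ).differentiableAt, ?_⟩
    rw [hderiv]
    exact hGc.comp (continuous_const.max (continuous_const.min continuous_id))
  · intro ξ
    rw [hderiv]
    set y : ℝ := max a (min b ξ) with hy
    show |G y| ≤ (l : ℝ) ^ 2 / c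
    have hya : a ≤ y := le_max_left _ _
    have hyb : y ≤ b := by
      rw [hy]
      exact max_le hab.le (min_le_left _ _)
    -- t y ∈ [0,1]
    have h0 : 0 ≤ t y := by
      rw [ht]
      apply div_nonneg _ hc.le
      rw [ha] at hya; linarith
    have h1 : t y ≤ 1 := by
      rw [ht]
      rw [div_le_one hc]
      rw [hb] at hyb; rw [hcdef]; linarith
    set A : ℝ := (1 - t y ^ l) ^ (l - 1) with hA
    set B : ℝ := t y ^ (l - 1) with hB
    have hpl0 : 0 ≤ t y ^ l := pow_nonneg h0 l
    have hpl1 : t y ^ l ≤ 1 := pow_le_one₀ h0 h1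
    have hA0 : 0 ≤ A := pow_nonneg (by linarith) _
    have hA1 : A ≤ 1 := pow_le_one₀ (by linarith) (by linarith)
    have hB0 : 0 ≤ B := pow_nonneg h0 _
    have hB1 : B ≤ 1 := pow_le_one₀ h0 h1
    have hGy : G y = -((l:ℝ)^2 * A * B / c) := by
      rw [hGdef, hA, hB]; ring
    rw [hGy, abs_neg, abs_of_nonneg (by positivity)]
    have hl2 : (0:ℝ) ≤ (l:ℝ)^2 := by positivity
    gcongr
    nlinarith [mul_nonneg hl2 hA0, mul_nonneg hl2 hB0]
end

section
/- (Optimal-order convergence of the CGFEM.) Let the CGFEM setup hold with 0 < h ≤ 1, let k ∈ ℕ, M > 0, C₃, C₄, C_m, C_N > 0, let u : ℝ^d → ℝ be differentiable, and for each i ∈ I let η_i : ℝ^d → ℝ be differentiable with the local reproducing property Σ_{l∈I_i} η_i(x_{i,l}) ξ̃ᵢˡ(x) = η_i(x) for all x ∈ Ω. Assume: (i) the Lebesgue measure of Ω ∩ ω_i is at most C_m h^d for every i; (ii) the number of indices satisfies |I| ≤ C_N h^{−d}; (iii) for every i ∈ I and every x ∈ Ω ∩ ω_i one has |u(x) − η_i(x)|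 ≤ M h^{k+1} and ‖D(u − η_i)(x)‖ ≤ M h^k; (iv) |u(x_{i,l}) − η_i(x_{i,l})| ≤ M h^{k+1} for every i ∈ I and l ∈ I_i; and (v) for every i ∈ I, l ∈ I_i, and x ∈ Ω ∩ ω_i one has |ξ̃ᵢˡ(x)| ≤ C₃ and ‖Dξ̃ᵢˡ(x)‖ ≤ C₄ h⁻¹. Then there is a constant C depending only on κ, κ′, C₁, C₂, C₃, C₄, C_m, C_N (and not on h, M, u, or the η_i) such that ∫_Ω ‖D(u − V_h u)(x)‖² dx ≤ C M² h^{2k}; one may take C = 4κ C_N C_m (C₁² + C₂² + κ′² (C₂² C₃² + C₁² C₄²)). -/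
open MeasureTheory

set_option maxHeartbeats 1000000 in
/-- Optimal-order convergence of the CGFEM. Under the CGFEM setup
with `0 < h ≤ 1`, local approximation errors of order `M h^{k+1}` (values) and
`M h^k` (derivatives), the local reproducing property, bounded least-squares basis
functions (`|ξ̃ᵢˡ| ≤ C₃`, `‖Dξ̃ᵢˡ‖ ≤ C₄ h⁻¹`), patch measures `≤ C_m h^d` and
`|I| ≤ C_N h^{−d}`, one has
`∫_Ω ‖D(u − V_h u)‖² ≤ C M² h^{2k}` with
`C = 4κ C_N C_m (C₁² + C₂² + κ′² (C₂² C₃² + C₁² C₄²))`. -/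
theorem cgfem_optimal_convergence {d : ℕ} {ι Λ : Type*} [Fintype ι]
    (Ω : Set (EuclideanSpace ℝ (Fin d))) (hΩ : IsOpen Ω)
    (h C₁ C₂ : ℝ) (hh : 0 < h) (hh1 : h ≤ 1) (hC₁ : 0 < C₁) (hC₂ : 0 < C₂)
    (κ κ' : ℕ) (hκ : 0 < κ) (hκ' : 0 < κ')
    (N : ι → EuclideanSpace ℝ (Fin d) → ℝ)
    (hNdiff : ∀ i, Differentiable ℝ (N i))
    (hPU : ∀ x ∈ Ω, ∑ i, N i x = 1)
    (ω : ι → Set (EuclideanSpace ℝ (Fin d)))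
    (hωmeas : ∀ i, MeasurableSet (ω i))
    (hsupp : ∀ i, ∀ x ∉ ω i, N i x = 0 ∧ fderiv ℝ (N i) x = 0)
    (hNbd : ∀ i x, |N i x| ≤ C₁)
    (hDNbd : ∀ i x, ‖fderiv ℝ (N i) x‖ ≤ C₂ / h)
    (hoverlap : ∀ x ∈ Ω, ({i | x ∈ ω i} : Set ι).ncard ≤ κ)
    (Ii : ι → Finset Λ) (hIi : ∀ i, (Ii i).card ≤ κ')
    (pts : ι → Λ → EuclideanSpace ℝ (Fin d))
    (ξt : ι → Λ → EuclideanSpace ℝ (Fin d) → ℝ)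
    (hξt : ∀ i l, Differentiable ℝ (ξt i l))
    (k : ℕ) (M C₃ C₄ Cm CN : ℝ)
    (hM : 0 < M) (hC₃ : 0 < C₃) (hC₄ : 0 < C₄) (hCm : 0 < Cm) (hCN : 0 < CN)
    (u : EuclideanSpace ℝ (Fin d) → ℝ) (hu : Differentiable ℝ u)
    (η : ι → EuclideanSpace ℝ (Fin d) → ℝ) (hη : ∀ i, Differentiable ℝ (η i))
    (hrep : ∀ i, ∀ x ∈ Ω, ∑ l ∈ Ii i, η i (pts i l) * ξt i l x = η i x)
    (hmeasure : ∀ i, volume (Ω ∩ ω i) ≤ ENNReal.ofReal (Cm * h ^ d))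
    (hcard : (Fintype.card ι : ℝ) ≤ CN / h ^ d)
    (happrox0 : ∀ i, ∀ x ∈ Ω ∩ ω i, |u x - η i x| ≤ M * h ^ (k + 1))
    (happrox1 : ∀ i, ∀ x ∈ Ω ∩ ω i,
      ‖fderiv ℝ (fun y => u y - η i y) x‖ ≤ M * h ^ k)
    (happroxpts : ∀ i, ∀ l ∈ Ii i, |u (pts i l) - η i (pts i l)| ≤ M * h ^ (k + 1))
    (hξtbd : ∀ i, ∀ l ∈ Ii i, ∀ x ∈ Ω ∩ ω i, |ξt i l x| ≤ C₃)
    (hDξtbd : ∀ i, ∀ l ∈ Ii i, ∀ x ∈ Ω ∩ ω i, ‖fderiv ℝ (ξt i l) x‖ ≤ C₄ / h)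
    (Vh : EuclideanSpace ℝ (Fin d) → ℝ)
    (hVh : ∀ x, Vh x = ∑ i, N i x * ∑ l ∈ Ii i, u (pts i l) * ξt i l x) :
    ∫ x in Ω, ‖fderiv ℝ (fun y => u y - Vh y) x‖ ^ 2 ≤
      4 * (κ : ℝ) * CN * Cm *
        (C₁ ^ 2 + C₂ ^ 2 + (κ' : ℝ) ^ 2 * (C₂ ^ 2 * C₃ ^ 2 + C₁ ^ 2 * C₄ ^ 2)) *
        M ^ 2 * h ^ (2 * k) := by
  classical
  have hd : (0:ℝ) < h ^ d := pow_pos hh d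
  set S : ι → EuclideanSpace ℝ (Fin d) → ℝ :=
    fun i x => ∑ l ∈ Ii i, u (pts i l) * ξt i l x with hSdef
  set w : ι → EuclideanSpace ℝ (Fin d) → ℝ :=
    fun i x => N i x * (u x - S i x) with hwdef
  have hSdiff : ∀ i, Differentiable ℝ (S i) := fun i =>
    Differentiable.fun_sum fun l _ => (hξt i l).const_mul _
  have hwdiff : ∀ i, Differentiable ℝ (w i) :=
    fun i => (hNdiff i).mul (hu.sub (hSdiff i))
  have hΩmeas : MeasurableSet Ω := hΩ.measurableSet
  set K : ℝ := 4 * (C₁ ^ 2 + C₂ ^ 2 + (κ' : ℝ) ^ 2 * (C₂ ^ 2 * C₃ ^ 2 + C₁ ^ 2 * C₄ ^ 2))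
      * M ^ 2 * h ^ (2 * k) with hKdef
  have hK : 0 ≤ K := by positivity
  -- Step A : fderiv identity on Ω
  have keyA : ∀ x ∈ Ω, fderiv ℝ (fun y => u y - Vh y) x = ∑ i, fderiv ℝ (w i) x := by
    intro x hx
    have hev : (fun y => u y - Vh y) =ᶠ[nhds x] (fun y => ∑ i, w i y) := by
      filter_upwards [hΩ.mem_nhds hx] with y hy
      rw [hVh]
      calc u y - ∑ i, N i y * ∑ l ∈ Ii i, u (pts i l) * ξt i l y
          = (∑ i, N i y) * u y - ∑ i, N i y * S i y := by rw [hPU y hy, one_mul]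
        _ = ∑ i, N i y * (u y - S i y) := by
            rw [Finset.sum_mul, ← Finset.sum_sub_distrib]
            exact Finset.sum_congr rfl fun i _ => by ring
        _ = ∑ i, w i y := rfl
    rw [hev.fderiv_eq]
    exact fderiv_fun_sum fun i _ => (hwdiff i).differentiableAt
  -- Step B : product rule for w i
  have hwfd : ∀ i x, fderiv ℝ (w i) x
      = N i x • fderiv ℝ (fun y => u y - S i y) x
        + (u x - S i x) • fderiv ℝ (N i) x := by
    intro i x
    exact fderiv_mul ((hNdiff i) x) ((hu.sub (hSdiff i)) x)
  have hzero : ∀ i x, x ∉ ω i → fderiv ℝ (w i) x = 0 := by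
    intro i x hx
    rw [hwfd, (hsupp i x hx).1, (hsupp i x hx).2]
    simp
  -- Step C : local bound
  have hbound : ∀ i, ∀ x ∈ Ω ∩ ω i, ‖fderiv ℝ (w i) x‖ ^ 2 ≤ K := by
    intro i x hx
    have hxΩ : x ∈ Ω := hx.1
    have hsum : ∑ l ∈ Ii i, (η i (pts i l) - u (pts i l)) * ξt i l x = η i x - S i x := by
      simp only [sub_mul, Finset.sum_sub_distrib, hrep i x hxΩ, hSdef]
    have hterm : ∀ l ∈ Ii i,
        |(η i (pts i l) - u (pts i l)) * ξt i l x| ≤ M * h ^ (k + 1) * C₃ := by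
      intro l hl
      rw [abs_mul]
      exact mul_le_mul (by rw [abs_sub_comm]; exact happroxpts i l hl)
        (hξtbd i l hl x hx) (abs_nonneg _) (by positivity)
    have hcardIi : ((Ii i).card : ℝ) ≤ (κ' : ℝ) := by exact_mod_cast hIi i
    have hval : |u x - S i x| ≤ M * h ^ (k + 1) * (1 + κ' * C₃) := by
      have heq : u x - S i x
          = (u x - η i x) + ∑ l ∈ Ii i, (η i (pts i l) - u (pts i l)) * ξt i l x := by
        rw [hsum]; ring
      rw [heq]
      calc |(u x - η i x) + ∑ l ∈ Ii i, (η i (pts i l) - u (pts i l)) * ξt i l x|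
          ≤ |u x - η i x| + |∑ l ∈ Ii i, (η i (pts i l) - u (pts i l)) * ξt i l x| :=
            abs_add_le _ _
        _ ≤ M * h ^ (k + 1) + ∑ l ∈ Ii i, M * h ^ (k + 1) * C₃ :=
            add_le_add (happrox0 i x hx)
              ((Finset.abs_sum_le_sum_abs _ _).trans (Finset.sum_le_sum hterm))
        _ ≤ M * h ^ (k + 1) + (κ' : ℝ) * (M * h ^ (k + 1) * C₃) := by
            rw [Finset.sum_const, nsmul_eq_mul]
            have : ((Ii i).card : ℝ) * (M * h ^ (k + 1) * C₃)
                ≤ (κ' : ℝ) * (M * h ^ (k + 1) * C₃) :=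
              mul_le_mul_of_nonneg_right hcardIi (by positivity)
            linarith
        _ = M * h ^ (k + 1) * (1 + κ' * C₃) := by ring
    have hder : ‖fderiv ℝ (fun y => u y - S i y) x‖ ≤ M * h ^ k * (1 + κ' * C₄) := by
      have hsplit : (fun y => u y - S i y)
          = fun y => (u y - η i y) + (η i y - S i y) := by funext y; ring
      have hev2 : (fun y => η i y - S i y)
          =ᶠ[nhds x] fun y => ∑ l ∈ Ii i, (η i (pts i l) - u (pts i l)) * ξt i l y := by
        filter_upwards [hΩ.mem_nhds hxΩ] with y hy
        simp only [sub_mul, Finset.sum_sub_distrib, hrep i y hy, hSdef]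
      have hR : fderiv ℝ (fun y => η i y - S i y) x
          = ∑ l ∈ Ii i, (η i (pts i l) - u (pts i l)) • fderiv ℝ (ξt i l) x := by
        rw [hev2.symm.fderiv_eq.symm,
          fderiv_fun_sum fun l _ => ((hξt i l).const_mul _).differentiableAt]
        exact Finset.sum_congr rfl fun l _ =>
          fderiv_const_mul (hξt i l x) _
      have hfd : fderiv ℝ (fun y => u y - S i y) x
          = fderiv ℝ (fun y => u y - η i y) x + fderiv ℝ (fun y => η i y - S i y) x := by
        rw [hsplit]
        exact fderiv_add ((hu x).sub ((hη i) x)) (((hη i) x).sub ((hSdiff i) x))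
      rw [hfd, hR]
      have h1 : ‖∑ l ∈ Ii i, (η i (pts i l) - u (pts i l)) • fderiv ℝ (ξt i l) x‖
          ≤ (κ' : ℝ) * (M * h ^ k * C₄) := by
        calc ‖∑ l ∈ Ii i, (η i (pts i l) - u (pts i l)) • fderiv ℝ (ξt i l) x‖
            ≤ ∑ l ∈ Ii i, ‖(η i (pts i l) - u (pts i l)) • fderiv ℝ (ξt i l) x‖ :=
              norm_sum_le _ _
          _ ≤ ∑ l ∈ Ii i, M * h ^ k * C₄ := by
              refine Finset.sum_le_sum fun l hl => ?_
              rw [norm_smul]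
              have e1 : ‖η i (pts i l) - u (pts i l)‖ ≤ M * h ^ (k + 1) := by
                rw [Real.norm_eq_abs, abs_sub_comm]; exact happroxpts i l hl
              have e2 : ‖fderiv ℝ (ξt i l) x‖ ≤ C₄ / h := hDξtbd i l hl x hx
              calc ‖η i (pts i l) - u (pts i l)‖ * ‖fderiv ℝ (ξt i l) x‖
                  ≤ (M * h ^ (k + 1)) * (C₄ / h) :=
                    mul_le_mul e1 e2 (norm_nonneg _) (by positivity)
                _ = M * h ^ k * C₄ := by
                    field_simp
                    ring
          _ ≤ (κ' : ℝ) * (M * h ^ k * C₄) := by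
              rw [Finset.sum_const, nsmul_eq_mul]
              exact mul_le_mul_of_nonneg_right hcardIi (by positivity)
      calc ‖fderiv ℝ (fun y => u y - η i y) x
            + ∑ l ∈ Ii i, (η i (pts i l) - u (pts i l)) • fderiv ℝ (ξt i l) x‖
          ≤ ‖fderiv ℝ (fun y => u y - η i y) x‖
            + ‖∑ l ∈ Ii i, (η i (pts i l) - u (pts i l)) • fderiv ℝ (ξt i l) x‖ :=
            norm_add_le _ _
        _ ≤ M * h ^ k + (κ' : ℝ) * (M * h ^ k * C₄) := add_le_add (happrox1 i x hx) h1
        _ = M * h ^ k * (1 + κ' * C₄) := by ring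
    have hnorm : ‖fderiv ℝ (w i) x‖
        ≤ M * h ^ k * (C₁ * (1 + κ' * C₄) + C₂ * (1 + κ' * C₃)) := by
      rw [hwfd]
      calc ‖N i x • fderiv ℝ (fun y => u y - S i y) x
            + (u x - S i x) • fderiv ℝ (N i) x‖
          ≤ ‖N i x • fderiv ℝ (fun y => u y - S i y) x‖
            + ‖(u x - S i x) • fderiv ℝ (N i) x‖ := norm_add_le _ _
        _ = |N i x| * ‖fderiv ℝ (fun y => u y - S i y) x‖
            + |u x - S i x| * ‖fderiv ℝ (N i) x‖ := by
            rw [norm_smul, norm_smul, Real.norm_eq_abs, Real.norm_eq_abs]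
        _ ≤ C₁ * (M * h ^ k * (1 + κ' * C₄))
            + (M * h ^ (k + 1) * (1 + κ' * C₃)) * (C₂ / h) :=
            add_le_add
              (mul_le_mul (hNbd i x) hder (norm_nonneg _) hC₁.le)
              (mul_le_mul hval (hDNbd i x) (norm_nonneg _) (by positivity))
        _ = M * h ^ k * (C₁ * (1 + κ' * C₄) + C₂ * (1 + κ' * C₃)) := by
            field_simp
            ring
    have hbase : (0:ℝ) ≤ M * h ^ k * (C₁ * (1 + κ' * C₄) + C₂ * (1 + κ' * C₃)) := by
      positivity
    have key : ∀ a b : ℝ, (C₁ * (1 + a) + C₂ * (1 + b)) ^ 2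
        ≤ 4 * (C₁ ^ 2 + C₂ ^ 2 + C₁ ^ 2 * a ^ 2 + C₂ ^ 2 * b ^ 2) := by
      intro a b
      nlinarith only [sq_nonneg (C₁ * (1 + a) - C₂ * (1 + b)), sq_nonneg (C₁ * a - C₁),
        sq_nonneg (C₂ * b - C₂), sq_nonneg C₁, sq_nonneg C₂]
    calc ‖fderiv ℝ (w i) x‖ ^ 2
        ≤ (M * h ^ k * (C₁ * (1 + κ' * C₄) + C₂ * (1 + κ' * C₃))) ^ 2 :=
          pow_le_pow_left₀ (norm_nonneg _) hnorm 2
      _ = M ^ 2 * h ^ (2 * k) * (C₁ * (1 + κ' * C₄) + C₂ * (1 + κ' * C₃)) ^ 2 := by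
          rw [mul_comm 2 k, pow_mul]; ring
      _ ≤ M ^ 2 * h ^ (2 * k) * (4 * (C₁ ^ 2 + C₂ ^ 2 + C₁ ^ 2 * ((κ' : ℝ) * C₄) ^ 2
            + C₂ ^ 2 * ((κ' : ℝ) * C₃) ^ 2)) :=
          mul_le_mul_of_nonneg_left (key _ _) (by positivity)
      _ = K := by rw [hKdef]; ring
  -- Step D : pointwise Cauchy–Schwarz bound
  set b : EuclideanSpace ℝ (Fin d) → ℝ :=
    fun x => (κ : ℝ) * ∑ i, Set.indicator (ω i) (fun _ => K) x with hbdef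
  have hgb : ∀ x ∈ Ω, ‖fderiv ℝ (fun y => u y - Vh y) x‖ ^ 2 ≤ b x := by
    intro x hx
    rw [keyA x hx]
    set F : Finset ι := Finset.univ.filter (fun i => x ∈ ω i) with hF
    have hFcard : (F.card : ℝ) ≤ (κ : ℝ) := by
      have h1 := hoverlap x hx
      have h2 : ({i | x ∈ ω i} : Set ι).ncard = F.card := by
        rw [Set.ncard_eq_toFinset_card', Set.toFinset_setOf]
      rw [h2] at h1
      exact_mod_cast h1
    have hsum_eq : ∑ i, fderiv ℝ (w i) x = ∑ i ∈ F, fderiv ℝ (w i) x :=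
      (Finset.sum_subset (Finset.subset_univ F) fun i _ hi =>
        hzero i x (by simpa [hF] using hi)).symm
    rw [hsum_eq]
    have cs : (∑ i ∈ F, ‖fderiv ℝ (w i) x‖) ^ 2
        ≤ (F.card : ℝ) * ∑ i ∈ F, ‖fderiv ℝ (w i) x‖ ^ 2 := by
      have := Finset.sum_mul_sq_le_sq_mul_sq F (fun _ => (1:ℝ))
        (fun i => ‖fderiv ℝ (w i) x‖)
      simpa using this
    calc ‖∑ i ∈ F, fderiv ℝ (w i) x‖ ^ 2
        ≤ (∑ i ∈ F, ‖fderiv ℝ (w i) x‖) ^ 2 :=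
          pow_le_pow_left₀ (norm_nonneg _) (norm_sum_le _ _) 2
      _ ≤ (F.card : ℝ) * ∑ i ∈ F, ‖fderiv ℝ (w i) x‖ ^ 2 := cs
      _ ≤ (κ : ℝ) * ∑ i ∈ F, ‖fderiv ℝ (w i) x‖ ^ 2 :=
          mul_le_mul_of_nonneg_right hFcard
            (Finset.sum_nonneg fun i _ => sq_nonneg _)
      _ ≤ (κ : ℝ) * ∑ i ∈ F, Set.indicator (ω i) (fun _ => K) x := by
          refine mul_le_mul_of_nonneg_left
            (Finset.sum_le_sum fun i hi => ?_) (Nat.cast_nonneg _)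
          have hxi : x ∈ ω i := by simpa [hF] using hi
          rw [Set.indicator_of_mem hxi]
          exact hbound i x ⟨hx, hxi⟩
      _ ≤ b x := by
          refine mul_le_mul_of_nonneg_left
            (Finset.sum_le_sum_of_subset_of_nonneg (Finset.subset_univ F)
              fun i _ _ => Set.indicator_nonneg (fun _ _ => hK) x) (Nat.cast_nonneg _)
  -- integrability of indicator pieces
  have hindint : ∀ i : ι,
      IntegrableOn (Set.indicator (ω i) (fun _ => K)) Ω := by
    intro i
    rw [IntegrableOn, integrable_indicator_iff (hωmeas i)]
    refine integrableOn_const (ne_of_lt ?_)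
    rw [Measure.restrict_apply (hωmeas i)]
    calc volume (ω i ∩ Ω) = volume (Ω ∩ ω i) := by rw [Set.inter_comm]
      _ ≤ ENNReal.ofReal (Cm * h ^ d) := hmeasure i
      _ < ⊤ := ENNReal.ofReal_lt_top
  have hbint : IntegrableOn b Ω := by
    refine Integrable.const_mul ?_ _
    exact integrable_finset_sum _ fun i _ => hindint i
  -- integrability of the squared norm
  have hVdiff : Differentiable ℝ Vh := by
    have : Vh = fun x => ∑ i, N i x * S i x := funext fun x => hVh x
    rw [this]
    exact Differentiable.fun_sum fun i _ => (hNdiff i).mul (hSdiff i)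
  have hgmeas : AEStronglyMeasurable
      (fun x => ‖fderiv ℝ (fun y => u y - Vh y) x‖ ^ 2) (volume.restrict Ω) :=
    (((measurable_fderiv ℝ (fun y => u y - Vh y)).norm.pow_const 2)).aestronglyMeasurable
  have hgint : IntegrableOn (fun x => ‖fderiv ℝ (fun y => u y - Vh y) x‖ ^ 2) Ω := by
    refine Integrable.mono' hbint hgmeas ?_
    filter_upwards [ae_restrict_mem hΩmeas] with x hx
    rw [Real.norm_of_nonneg (by positivity)]
    exact hgb x hx
  -- put it together
  have hmain : ∫ x in Ω, ‖fderiv ℝ (fun y => u y - Vh y) x‖ ^ 2 ≤ ∫ x in Ω, b x :=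
    setIntegral_mono_on hgint hbint hΩmeas hgb
  have hbval : ∫ x in Ω, b x ≤ (κ : ℝ) * ((Fintype.card ι : ℝ) * (K * (Cm * h ^ d))) := by
    rw [hbdef]
    rw [integral_const_mul]
    refine mul_le_mul_of_nonneg_left ?_ (Nat.cast_nonneg _)
    rw [integral_finset_sum _ fun i _ => hindint i]
    have hone : ∀ i : ι,
        ∫ x in Ω, Set.indicator (ω i) (fun _ => K) x ≤ K * (Cm * h ^ d) := by
      intro i
      rw [integral_indicator (hωmeas i), setIntegral_const,
        measureReal_def, Measure.restrict_apply (hωmeas i), smul_eq_mul]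
      have hle : (volume (ω i ∩ Ω)).toReal ≤ Cm * h ^ d := by
        rw [Set.inter_comm]
        have := ENNReal.toReal_mono ENNReal.ofReal_ne_top (hmeasure i)
        rwa [ENNReal.toReal_ofReal (by positivity)] at this
      calc (volume (ω i ∩ Ω)).toReal * K ≤ (Cm * h ^ d) * K :=
            mul_le_mul_of_nonneg_right hle hK
        _ = K * (Cm * h ^ d) := by ring
    calc ∑ i, ∫ x in Ω, Set.indicator (ω i) (fun _ => K) x
        ≤ ∑ _i : ι, K * (Cm * h ^ d) := Finset.sum_le_sum fun i _ => hone i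
      _ = (Fintype.card ι : ℝ) * (K * (Cm * h ^ d)) := by
          rw [Finset.sum_const, nsmul_eq_mul, Finset.card_univ]
  have hfin : (κ : ℝ) * ((Fintype.card ι : ℝ) * (K * (Cm * h ^ d)))
      ≤ 4 * (κ : ℝ) * CN * Cm *
        (C₁ ^ 2 + C₂ ^ 2 + (κ' : ℝ) ^ 2 * (C₂ ^ 2 * C₃ ^ 2 + C₁ ^ 2 * C₄ ^ 2)) *
        M ^ 2 * h ^ (2 * k) := by
    have step : (Fintype.card ι : ℝ) * (K * (Cm * h ^ d))
        ≤ (CN / h ^ d) * (K * (Cm * h ^ d)) :=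
      mul_le_mul_of_nonneg_right hcard (by positivity)
    have heq : (CN / h ^ d) * (K * (Cm * h ^ d)) = CN * Cm * K := by
      field_simp
    calc (κ : ℝ) * ((Fintype.card ι : ℝ) * (K * (Cm * h ^ d)))
        ≤ (κ : ℝ) * ((CN / h ^ d) * (K * (Cm * h ^ d))) :=
          mul_le_mul_of_nonneg_left step (Nat.cast_nonneg _)
      _ = (κ : ℝ) * (CN * Cm * K) := by rw [heq]
      _ = 4 * (κ : ℝ) * CN * Cm *
          (C₁ ^ 2 + C₂ ^ 2 + (κ' : ℝ) ^ 2 * (C₂ ^ 2 * C₃ ^ 2 + C₁ ^ 2 * C₄ ^ 2)) *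
          M ^ 2 * h ^ (2 * k) := by rw [hKdef]; ring
  linarith
end
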